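/- arXiv:2509.02849 — 4 statements merged into one kernel-verified Lean document; each statement's English description precedes it below -/
import Mathlib

section
/- Let A₁, ..., A_p be n×n real symmetric positive semidefinite matrices and let A = ∑ₖ Aₖ. Let B₁, ..., B_p be n×m real matrices, B = ∑ₖ Bₖ, and Γ an m×m symmetric positive semidefinite matrix. If the block matrix G = [[A, B], [Bᵀ, Γ]] is positive semidefinite, then setting X = A† B, the matrices Cₖ = (1/p)(Γ - Xᵀ B) + Xᵀ Aₖ X satisfy ∑ₖ Cₖ = Γ and each block matrix [[Aₖ, Aₖ X], [Xᵀ Aₖᵀ, Cₖ]] is positive semidefinite. -/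
open Matrix

/-- The four Penrose conditions characterizing the Moore–Penrose pseudoinverse. -/
def IsMoorePenrose {n m : Type*} [Fintype n] [Fintype m]
    (A : Matrix n m ℝ) (Ad : Matrix m n ℝ) : Prop :=
  A * Ad * A = A ∧ Ad * A * Ad = Ad ∧ (A * Ad)ᵀ = A * Ad ∧ (Ad * A)ᵀ = Ad * A

private lemma lin_zero' {a c : ℝ} (h : ∀ t : ℝ, 0 ≤ t * a + c) : a = 0 := by
  by_contra ha
  have h1 := h ((-(c+1))/a)
  rw [div_mul_cancel₀ _ ha] at h1
  linarith

private lemma smul_psd' {m : ℕ} {c : ℝ} (hc : 0 ≤ c) {D : Matrix (Fin m) (Fin m) ℝ}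
    (hD : D.PosSemidef) : (c • D).PosSemidef := by
  refine posSemidef_iff_dotProduct_mulVec.mpr ⟨?_, fun x => ?_⟩
  · have h := hD.1
    rw [IsHermitian, conjTranspose_smul] at *
    rw [h]
    simp
  · rw [smul_mulVec, dotProduct_smul]
    exact mul_nonneg hc (hD.dotProduct_mulVec_nonneg x)

/-- If `[[S, Bs], [Bsᵀ, Γ]] ⪰ 0` and `Q` is a symmetric idempotent with `Q * S = 0`,
then `Q * Bs = 0` (the column space of `Bs` lies in that of `S`). -/
private lemma QB_zero' {n m : ℕ} (S : Matrix (Fin n) (Fin n) ℝ) (Bs : Matrix (Fin n) (Fin m) ℝ)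
    (Γ : Matrix (Fin m) (Fin m) ℝ)
    (hG : (Matrix.fromBlocks S Bs Bsᵀ Γ).PosSemidef)
    (Q : Matrix (Fin n) (Fin n) ℝ) (hQs : Qᵀ = Q) (hQS : Q * S = 0) (hQQ : Q * Q = Q) :
    Q * Bs = 0 := by
  have hSQ : S * Q = 0 := by
    calc S * Q = (Qᵀ * Sᵀ)ᵀ := by rw [transpose_mul, transpose_transpose, transpose_transpose]
    _ = 0 := by
        rw [hQs]
        have hSs : Sᵀ = S := by
          have := hG.1
          rw [IsHermitian, conjTranspose_eq_transpose_of_trivial] at this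
          have := congrArg Matrix.toBlocks₁₁ this
          simpa [fromBlocks_transpose, toBlocks_fromBlocks₁₁] using this
        rw [hSs, hQS, transpose_zero]
  have key : ∀ y : Fin m → ℝ, Q *ᵥ (Bs *ᵥ y) = 0 := by
    intro y
    set b := Bs *ᵥ y with hb
    set u := Q *ᵥ b with hu
    have hub : u ⬝ᵥ b = 0 := by
      have h2 : ∀ t : ℝ, 0 ≤ t * (2 * (u ⬝ᵥ b)) + y ⬝ᵥ Γ *ᵥ y := by
        intro t
        have := hG.dotProduct_mulVec_nonneg (Sum.elim (t • u) y)
        rw [star_trivial, fromBlocks_mulVec, sumElim_dotProduct_sumElim] at this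
        simp only [Sum.elim_comp_inl, Sum.elim_comp_inr] at this
        have hSu : S *ᵥ (t • u) = 0 := by
          rw [mulVec_smul, hu, mulVec_mulVec, hSQ, zero_mulVec, smul_zero]
        have e1 : t • u ⬝ᵥ Bs *ᵥ y = t * (u ⬝ᵥ b) := by
          rw [smul_dotProduct, smul_eq_mul, hb]
        have e2 : y ⬝ᵥ Bsᵀ *ᵥ (t • u) = t * (u ⬝ᵥ b) := by
          rw [dotProduct_mulVec, vecMul_transpose, ← hb, dotProduct_smul, smul_eq_mul,
            dotProduct_comm b u]
        rw [hSu, zero_add, dotProduct_add, e1, e2] at this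
        linarith
      have := lin_zero' h2
      linarith
    have huu : u ⬝ᵥ u = 0 := by
      calc u ⬝ᵥ u = (b ᵥ* Qᵀ) ⬝ᵥ u := by rw [vecMul_transpose]
        _ = b ⬝ᵥ Q *ᵥ u := by rw [hQs, ← dotProduct_mulVec]
        _ = b ⬝ᵥ u := by rw [hu, mulVec_mulVec, hQQ]
        _ = 0 := by rw [dotProduct_comm]; exact hub
    exact dotProduct_self_eq_zero.mp huu
  ext i j
  have := congrFun (key (Pi.single j 1)) i
  rw [mulVec_single_one] at this
  simpa [mulVec, dotProduct, mul_apply] using this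

/-- Generalized Schur complement nonnegativity. -/
private lemma schur_psd' {n m : ℕ} (S : Matrix (Fin n) (Fin n) ℝ) (Bs : Matrix (Fin n) (Fin m) ℝ)
    (Γ : Matrix (Fin m) (Fin m) ℝ) (hΓs : Γᵀ = Γ)
    (hG : (Matrix.fromBlocks S Bs Bsᵀ Γ).PosSemidef)
    (X : Matrix (Fin n) (Fin m) ℝ) (hSX : S * X = Bs)
    (hsym : (Xᵀ * Bs)ᵀ = Xᵀ * Bs) :
    (Γ - Xᵀ * Bs).PosSemidef := by
  refine posSemidef_iff_dotProduct_mulVec.mpr ⟨?_, fun y => ?_⟩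
  · rw [IsHermitian, conjTranspose_eq_transpose_of_trivial, transpose_sub, hΓs, hsym]
  · rw [star_trivial]
    have h := hG.dotProduct_mulVec_nonneg (Sum.elim (-(X *ᵥ y)) y)
    rw [star_trivial, fromBlocks_mulVec, sumElim_dotProduct_sumElim] at h
    simp only [Sum.elim_comp_inl, Sum.elim_comp_inr] at h
    have eS : S *ᵥ (-(X *ᵥ y)) = -(Bs *ᵥ y) := by
      rw [mulVec_neg, mulVec_mulVec, hSX]
    have eB : Bsᵀ *ᵥ (-(X *ᵥ y)) = -((Xᵀ * Bs) *ᵥ y) := by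
      rw [mulVec_neg, mulVec_mulVec, ← hsym, transpose_mul, transpose_transpose]
    rw [eS, eB, neg_add_cancel, dotProduct_zero, zero_add, dotProduct_add] at h
    rw [Matrix.sub_mulVec, dotProduct_sub]
    have : y ⬝ᵥ -((Xᵀ * Bs) *ᵥ y) = -(y ⬝ᵥ (Xᵀ * Bs) *ᵥ y) := by
      rw [dotProduct_neg]
    linarith [h, this.symm ▸ h]

/-- Construction of the arrow decomposition: if `G = [[∑Aₖ, ∑Bₖ], [(∑Bₖ)ᵀ, Γ]] ⪰ 0` with all
`Aₖ ⪰ 0` and `Γ ⪰ 0`, then with `X = A†B` and `Cₖ = (1/p)(Γ - XᵀB) + XᵀAₖX` we have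
`∑ Cₖ = Γ` and each `[[Aₖ, AₖX], [XᵀAₖᵀ, Cₖ]] ⪰ 0`. -/
theorem stmt1 {n m p : ℕ} (hp : 0 < p)
    (A : Fin p → Matrix (Fin n) (Fin n) ℝ) (hA : ∀ k, (A k).PosSemidef)
    (B : Fin p → Matrix (Fin n) (Fin m) ℝ)
    (Γ : Matrix (Fin m) (Fin m) ℝ) (hΓ : Γ.PosSemidef)
    (Adag : Matrix (Fin n) (Fin n) ℝ) (hdag : IsMoorePenrose (∑ k, A k) Adag)
    (hG : (Matrix.fromBlocks (∑ k, A k) (∑ k, B k) (∑ k, B k)ᵀ Γ).PosSemidef)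
    (X : Matrix (Fin n) (Fin m) ℝ) (hX : X = Adag * ∑ k, B k)
    (C : Fin p → Matrix (Fin m) (Fin m) ℝ)
    (hC : ∀ k, C k = (p : ℝ)⁻¹ • (Γ - Xᵀ * ∑ l, B l) + Xᵀ * A k * X) :
    (∑ k, C k = Γ) ∧
      ∀ k, (Matrix.fromBlocks (A k) (A k * X) (Xᵀ * (A k)ᵀ) (C k)).PosSemidef := by
  obtain ⟨h1, h2, h3, h4⟩ := hdag
  set S := ∑ k, A k with hSdef
  set Bs := ∑ k, B k with hBsdef
  have hSpsd : S.PosSemidef := by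
    rw [hSdef]
    exact Finset.sum_induction A _ (fun a b ha hb => ha.add hb) .zero (fun k _ => hA k)
  have hSsym : Sᵀ = S := by
    have := hSpsd.1
    rwa [IsHermitian, conjTranspose_eq_transpose_of_trivial] at this
  have hΓsym : Γᵀ = Γ := by
    have := hΓ.1
    rwa [IsHermitian, conjTranspose_eq_transpose_of_trivial] at this
  -- the projection Q
  set Q : Matrix (Fin n) (Fin n) ℝ := 1 - S * Adag with hQdef
  have hQs : Qᵀ = Q := by rw [hQdef, transpose_sub, transpose_one, h3]
  have hQS : Q * S = 0 := by rw [hQdef, Matrix.sub_mul, Matrix.one_mul, h1, sub_self]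
  have hQQ : Q * Q = Q := by
    have hMM : (S * Adag) * (S * Adag) = S * Adag := by rw [← Matrix.mul_assoc, h1]
    simp only [hQdef, Matrix.sub_mul, Matrix.mul_sub, Matrix.one_mul, Matrix.mul_one, hMM]
    abel
  have hQB : Q * Bs = 0 := QB_zero' S Bs Γ hG Q hQs hQS hQQ
  have hSAB : S * Adag * Bs = Bs := by
    rw [hQdef, Matrix.sub_mul, Matrix.one_mul, sub_eq_zero] at hQB
    exact hQB.symm
  have hSX : S * X = Bs := by rw [hX, ← Matrix.mul_assoc]; exact hSAB
  have e_comm : Adagᵀ * S = S * Adag := by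
    calc Adagᵀ * S = (Sᵀ * Adag)ᵀ := by rw [transpose_mul, transpose_transpose]
      _ = (S * Adag)ᵀ := by rw [hSsym]
      _ = S * Adag := h3
  have hBt : Bsᵀ * (S * Adag) = Bsᵀ := by
    have h := congrArg Matrix.transpose hSAB
    rwa [transpose_mul, h3] at h
  have hsym : (Xᵀ * Bs)ᵀ = Xᵀ * Bs := by
    have key : Bsᵀ * (Adag * Bs) = Bsᵀ * (Adagᵀ * Bs) := by
      have rhs : Adagᵀ * Bs = (S * Adag) * (Adag * Bs) := by
        calc Adagᵀ * Bs = Adagᵀ * (S * (Adag * Bs)) := by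
              rw [← Matrix.mul_assoc S Adag Bs, hSAB]
          _ = (Adagᵀ * S) * (Adag * Bs) := by rw [Matrix.mul_assoc]
          _ = (S * Adag) * (Adag * Bs) := by rw [e_comm]
      rw [rhs, ← Matrix.mul_assoc Bsᵀ (S * Adag) (Adag * Bs), hBt]
    calc (Xᵀ * Bs)ᵀ = Bsᵀ * X := by rw [transpose_mul, transpose_transpose]
      _ = Bsᵀ * (Adag * Bs) := by rw [hX]
      _ = Bsᵀ * (Adagᵀ * Bs) := key
      _ = (Bsᵀ * Adagᵀ) * Bs := by rw [Matrix.mul_assoc]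
      _ = Xᵀ * Bs := by rw [← transpose_mul, ← hX]
  have hSchur : (Γ - Xᵀ * Bs).PosSemidef := schur_psd' S Bs Γ hΓsym hG X hSX hsym
  have hpc : ((p : ℝ))⁻¹ * (p : ℝ) = 1 := by
    rw [inv_mul_cancel₀]
    exact_mod_cast hp.ne'
  constructor
  · -- sum of the C k is Γ
    have hsum : ∑ k, C k = (p : ℝ)⁻¹ • ((p : ℝ) • (Γ - Xᵀ * Bs)) + Xᵀ * S * X := by
      calc ∑ k, C k = ∑ k, ((p : ℝ)⁻¹ • (Γ - Xᵀ * Bs) + Xᵀ * A k * X) := by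
            exact Finset.sum_congr rfl fun k _ => hC k
        _ = (∑ _k : Fin p, (p : ℝ)⁻¹ • (Γ - Xᵀ * Bs)) + ∑ k, Xᵀ * A k * X := by
            rw [Finset.sum_add_distrib]
        _ = (p : ℝ)⁻¹ • ((p : ℝ) • (Γ - Xᵀ * Bs)) + Xᵀ * S * X := by
            congr 1
            · rw [Finset.sum_const, Finset.card_univ, Fintype.card_fin, smul_comm,
                ← Nat.cast_smul_eq_nsmul ℝ]
            · rw [hSdef, Matrix.mul_sum, Matrix.sum_mul]
    rw [hsum, smul_smul, hpc, one_smul, Matrix.mul_assoc, hSX, sub_add_cancel]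
  · -- each block is PSD
    intro k
    have hAk := hA k
    have hAkt : (A k)ᵀ = A k := by
      have := hAk.1
      rwa [IsHermitian, conjTranspose_eq_transpose_of_trivial] at this
    set D : Matrix (Fin m) (Fin m) ℝ := (p : ℝ)⁻¹ • (Γ - Xᵀ * Bs) with hDdef
    have hDpsd : D.PosSemidef := smul_psd' (by positivity) hSchur
    set E : Matrix (Fin n) (Fin n ⊕ Fin m) ℝ := fromCols 1 X with hEdef
    set F : Matrix (Fin m) (Fin n ⊕ Fin m) ℝ := fromCols 0 1 with hFdef
    have hE : Eᴴ * A k * E = fromBlocks (A k) (A k * X) (Xᵀ * A k) (Xᵀ * A k * X) := by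
      rw [hEdef, conjTranspose_eq_transpose_of_trivial, transpose_fromCols, transpose_one,
        fromRows_mul, fromRows_mul_fromCols]
      simp [Matrix.mul_assoc]
    have hF : Fᴴ * D * F = fromBlocks 0 0 0 D := by
      rw [hFdef, conjTranspose_eq_transpose_of_trivial, transpose_fromCols, transpose_one,
        transpose_zero, fromRows_mul, fromRows_mul_fromCols]
      simp
    have hdecomp : Matrix.fromBlocks (A k) (A k * X) (Xᵀ * (A k)ᵀ) (C k)
        = Eᴴ * A k * E + Fᴴ * D * F := by
      rw [hE, hF, hC k, hAkt, fromBlocks_add]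
      congr 1 <;> simp [add_comm]
    rw [hdecomp]
    exact (hAk.conjTranspose_mul_mul_same E).add (hDpsd.conjTranspose_mul_mul_same F)
end

section
/- For real matrices A and B, the Moore–Penrose pseudoinverse of the Kronecker product satisfies (A ⊗ B)† = A† ⊗ B†. -/
open Matrix Kronecker

/-- `(A ⊗ B)† = A† ⊗ B†`: if `Adag` and `Bdag` are the Moore–Penrose pseudoinverses of
`A` and `B`, then `Adag ⊗ Bdag` is the Moore–Penrose pseudoinverse of `A ⊗ B`. -/
theorem stmt7 {n m p q : ℕ}
    (A : Matrix (Fin n) (Fin m) ℝ) (B : Matrix (Fin p) (Fin q) ℝ)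
    (Adag : Matrix (Fin m) (Fin n) ℝ) (Bdag : Matrix (Fin q) (Fin p) ℝ)
    (hA : IsMoorePenrose A Adag) (hB : IsMoorePenrose B Bdag) :
    IsMoorePenrose (A ⊗ₖ B) (Adag ⊗ₖ Bdag) := by
  obtain ⟨hA1, hA2, hA3, hA4⟩ := hA
  obtain ⟨hB1, hB2, hB3, hB4⟩ := hB
  refine ⟨?_, ?_, ?_, ?_⟩ <;>
    simp only [← Matrix.mul_kronecker_mul, ← Matrix.kroneckerMap_transpose,
      hA1, hA2, hA3, hA4, hB1, hB2, hB3, hB4]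
end

section
/- Let A(x) be an n×n symmetric polynomial matrix, P an n×s real matrix of full column rank with PᵀP = I_s, such that for all x ∈ ℝ^{n_x} the column span of A(x) is contained in the column span of P. Let b(x) be a length-L vector of polynomials and L_y a linear functional applied entrywise. Then the column span of L_y(A(x) ⊗ b(x)ᵀ b(x)) is contained in the column span of P ⊗ I_L. -/
open Matrix Kronecker MvPolynomial

/-- If `span(A(x)) ⊆ span(P)` for all `x`, with `PᵀP = I`, then the column span of the
localizing matrix `L_y(A(x) ⊗ b(x)ᵀ b(x))` is contained in the column span of `P ⊗ I_L`. -/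
theorem stmt15 {n s L nx : ℕ}
    (A : Matrix (Fin n) (Fin n) (MvPolynomial (Fin nx) ℝ))
    (P : Matrix (Fin n) (Fin s) ℝ) (hP : Pᵀ * P = 1)
    (hspan : ∀ (x : Fin nx → ℝ) (v : Fin n → ℝ),
      (A.map (fun q => eval x q)).mulVec v ∈ Set.range P.mulVec)
    (b : Fin L → MvPolynomial (Fin nx) ℝ)
    (Ly : MvPolynomial (Fin nx) ℝ →ₗ[ℝ] ℝ) :
    ∀ v, (Matrix.of fun (pq : Fin n × Fin L) (rs : Fin n × Fin L) =>
        Ly (A pq.1 rs.1 * (b pq.2 * b rs.2))).mulVec v ∈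
      Set.range (P ⊗ₖ (1 : Matrix (Fin L) (Fin L) ℝ)).mulVec := by
  have key : ∀ (i r : Fin n),
      (∑ k : Fin s, ∑ j : Fin n, (P i k * P j k) • A j r) = A i r := by
    intro i r
    apply MvPolynomial.funext
    intro x
    obtain ⟨u, hu⟩ := hspan x (Pi.single r 1)
    have hB : ∀ j, eval x (A j r) = ∑ m, P j m * u m := by
      intro j
      have h := congrFun hu j
      simp [Matrix.mulVec, dotProduct, Pi.single_apply, mul_ite, Matrix.map_apply] at h
      simpa [Matrix.mulVec, dotProduct] using h.symm
    have hPt : ∀ k, ∑ j, P j k * (∑ m, P j m * u m) = u k := by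
      intro k
      have h1 : Pᵀ.mulVec (P.mulVec u) = u := by
        rw [Matrix.mulVec_mulVec, hP, one_mulVec]
      have := congrFun h1 k
      simpa [Matrix.mulVec, dotProduct, Matrix.transpose_apply] using this
    have : eval x (∑ k : Fin s, ∑ j : Fin n, (P i k * P j k) • A j r)
        = ∑ k : Fin s, ∑ j : Fin n, P i k * P j k * eval x (A j r) := by
      simp [smul_eq_C_mul, mul_assoc]
    rw [this, hB i]
    calc ∑ k : Fin s, ∑ j : Fin n, P i k * P j k * eval x (A j r)
        = ∑ k : Fin s, P i k * ∑ j : Fin n, P j k * eval x (A j r) := by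
          simp [Finset.mul_sum, mul_assoc]
      _ = ∑ k : Fin s, P i k * u k := by
          refine Finset.sum_congr rfl fun k _ => ?_
          congr 1
          simpa [hB] using hPt k
      _ = ∑ m, P i m * u m := rfl
  intro v
  set N : Matrix (Fin s × Fin L) (Fin n × Fin L) ℝ :=
    Matrix.of fun (kl : Fin s × Fin L) (rt : Fin n × Fin L) =>
      Ly (∑ j : Fin n, (P j kl.1) • (A j rt.1 * (b kl.2 * b rt.2))) with hN
  refine ⟨N.mulVec v, ?_⟩
  rw [Matrix.mulVec_mulVec]
  suffices hM : (P ⊗ₖ (1 : Matrix (Fin L) (Fin L) ℝ)) * N =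
      (Matrix.of fun (pq : Fin n × Fin L) (rs : Fin n × Fin L) =>
        Ly (A pq.1 rs.1 * (b pq.2 * b rs.2))) by rw [hM]
  ext pq rt
  rw [Matrix.mul_apply]
  rw [Fintype.sum_prod_type]
  have hcol : ∀ k : Fin s,
      ∑ l : Fin L, (P ⊗ₖ (1 : Matrix (Fin L) (Fin L) ℝ)) pq (k, l) * N (k, l) rt
        = P pq.1 k * N (k, pq.2) rt := by
    intro k
    simp [Matrix.kroneckerMap_apply, Matrix.one_apply, ite_mul, mul_ite]
  simp only [hcol]
  simp only [hN]
  have : ∑ k : Fin s, P pq.1 k *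
      Ly (∑ j : Fin n, (P j k) • (A j rt.1 * (b pq.2 * b rt.2)))
      = Ly (∑ k : Fin s, ∑ j : Fin n,
          (P pq.1 k * P j k) • (A j rt.1 * (b pq.2 * b rt.2))) := by
    rw [map_sum]
    refine Finset.sum_congr rfl fun k _ => ?_
    rw [← smul_eq_mul, ← Ly.map_smul, Finset.smul_sum]
    exact congrArg _ (Finset.sum_congr rfl fun j _ => by rw [smul_smul])
  simp only [Matrix.of_apply]
  rw [this]
  congr 1
  calc ∑ k : Fin s, ∑ j : Fin n, (P pq.1 k * P j k) • (A j rt.1 * (b pq.2 * b rt.2))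
      = (∑ k : Fin s, ∑ j : Fin n, (P pq.1 k * P j k) • A j rt.1) * (b pq.2 * b rt.2) := by
        simp [Finset.sum_mul, smul_mul_assoc]
    _ = A pq.1 rt.1 * (b pq.2 * b rt.2) := by rw [key]
end

section
/- Let G = [[A, B], [Bᵀ, Γ]] be a symmetric block matrix with A ⪰ 0, and suppose additionally that Γ - Bᵀ A† B ≻ 0 (positive definite) and A A† B = B. Let A = ∑_{k=1}^p Aₖ with each Aₖ ⪰ 0, let X = A† B, S = (1/p)(Γ - Bᵀ A† B), and Cₖ = S + Xᵀ Aₖ X. Then for each k, and for any matrix Pₖ with orthonormal columns whose span equals span(Aₖ), the matrix [[Pₖᵀ Aₖ Pₖ, Pₖᵀ Aₖ X], [Xᵀ Aₖᵀ Pₖ, Xᵀ Aₖ X + S]] is positive definite. -/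
open Matrix

/-- Strict feasibility of the projected arrow decomposition: with `A = ∑ Aₖ`, each `Aₖ ⪰ 0`,
`Γ - BᵀA†B ≻ 0`, `A A† B = B`, `X = A†B`, `S = (1/p)(Γ - BᵀA†B)`, and `Pₖ` having orthonormal
columns with `span(Pₖ) = span(Aₖ)`, each projected block matrix
`[[PₖᵀAₖPₖ, PₖᵀAₖX], [XᵀAₖᵀPₖ, XᵀAₖX + S]]` is positive definite. -/
theorem stmt19 {n m p : ℕ} (hp : 0 < p)
    (A : Fin p → Matrix (Fin n) (Fin n) ℝ) (hA : ∀ k, (A k).PosSemidef)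
    (B : Matrix (Fin n) (Fin m) ℝ)
    (Γ : Matrix (Fin m) (Fin m) ℝ) (hΓ : Γᵀ = Γ)
    (Adag : Matrix (Fin n) (Fin n) ℝ) (hdag : IsMoorePenrose (∑ k, A k) Adag)
    (hAB : (∑ k, A k) * Adag * B = B)
    (hSchur : (Γ - Bᵀ * Adag * B).PosDef)
    (X : Matrix (Fin n) (Fin m) ℝ) (hX : X = Adag * B)
    (S : Matrix (Fin m) (Fin m) ℝ) (hS : S = (p : ℝ)⁻¹ • (Γ - Bᵀ * Adag * B))
    (s : Fin p → ℕ) (P : ∀ k, Matrix (Fin n) (Fin (s k)) ℝ)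
    (hPo : ∀ k, (P k)ᵀ * P k = 1)
    (hPspan : ∀ k, Set.range (A k).mulVec = Set.range (P k).mulVec) :
    ∀ k, (Matrix.fromBlocks ((P k)ᵀ * A k * P k) ((P k)ᵀ * (A k * X))
        (Xᵀ * (A k)ᵀ * P k) (Xᵀ * A k * X + S)).PosDef := by
  intro k
  have hAk := hA k
  have hAsym : (A k)ᵀ = A k := hAk.1
  have hSsym : Sᵀ = S := by
    rw [hS, transpose_smul]
    congr 1
    exact hSchur.1
  have hSpd : S.PosDef := by
    refine Matrix.PosDef.of_dotProduct_mulVec_pos hSsym (fun v hv => ?_)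
    have h1 := hSchur.dotProduct_mulVec_pos hv
    simp only [star_trivial] at h1 ⊢
    rw [hS, smul_mulVec, dotProduct_smul, smul_eq_mul]
    have hpinv : (0:ℝ) < (p : ℝ)⁻¹ := by positivity
    exact mul_pos hpinv h1
  refine posDef_iff_dotProduct_mulVec.mpr ⟨?_, ?_⟩
  · show _ = _
    rw [conjTranspose_eq_transpose_of_trivial, fromBlocks_transpose]
    have h11 : ((P k)ᵀ * A k * P k)ᵀ = (P k)ᵀ * A k * P k := by
      rw [transpose_mul, transpose_mul, transpose_transpose, hAsym, Matrix.mul_assoc]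
    have h12 : ((P k)ᵀ * (A k * X))ᵀ = Xᵀ * (A k)ᵀ * P k := by
      rw [transpose_mul, transpose_mul, transpose_transpose, Matrix.mul_assoc]
    have h21 : (Xᵀ * (A k)ᵀ * P k)ᵀ = (P k)ᵀ * (A k * X) := by
      simp [transpose_mul, hAsym, Matrix.mul_assoc]
    have h22 : (Xᵀ * A k * X + S)ᵀ = Xᵀ * A k * X + S := by
      rw [transpose_add, transpose_mul, transpose_mul, transpose_transpose, hAsym, hSsym,
        Matrix.mul_assoc]
    rw [h11, h12, h21, h22]
  · intro x hx
    set u : Fin (s k) → ℝ := x ∘ Sum.inl with hu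
    set v : Fin m → ℝ := x ∘ Sum.inr with hv
    have hxe : x = Sum.elim u v := by
      funext i; cases i <;> rfl
    set y : Fin n → ℝ := P k *ᵥ u + X *ᵥ v with hy
    have key : star x ⬝ᵥ (fromBlocks ((P k)ᵀ * A k * P k) ((P k)ᵀ * (A k * X))
        (Xᵀ * (A k)ᵀ * P k) (Xᵀ * A k * X + S)) *ᵥ x
        = y ⬝ᵥ (A k *ᵥ y) + v ⬝ᵥ (S *ᵥ v) := by
      rw [hxe]
      simp only [star_trivial, fromBlocks_mulVec, Sum.elim_comp_inl, Sum.elim_comp_inr, hy,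
        add_mulVec, mulVec_add, dotProduct_add, add_dotProduct, ← mulVec_mulVec, hAsym,
        sumElim_dotProduct_sumElim, mulVec_transpose]
      have hPt : ∀ z : Fin n → ℝ, u ⬝ᵥ (z ᵥ* P k) = (P k *ᵥ u) ⬝ᵥ z := by
        intro z; rw [dotProduct_comm, ← dotProduct_mulVec, dotProduct_comm]
      have hXt : ∀ z : Fin n → ℝ, v ⬝ᵥ (z ᵥ* X) = (X *ᵥ v) ⬝ᵥ z := by
        intro z; rw [dotProduct_comm, ← dotProduct_mulVec, dotProduct_comm]
      rw [hPt, hPt, hXt, hXt]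
      ring
    rw [key]
    have hAq : 0 ≤ y ⬝ᵥ (A k *ᵥ y) := hAk.dotProduct_mulVec_nonneg y
    by_cases hv0 : v = 0
    · have hu0 : u ≠ 0 := by
        intro h
        apply hx
        rw [hxe, h, hv0]
        funext i; cases i <;> rfl
      have hy0 : y ≠ 0 := by
        intro h
        apply hu0
        have h2 : (P k)ᵀ *ᵥ y = 0 := by rw [h, mulVec_zero]
        rw [hy, hv0, mulVec_zero, add_zero, mulVec_mulVec, hPo k, one_mulVec] at h2
        exact h2
      have hq : y ⬝ᵥ (A k *ᵥ y) ≠ 0 := by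
        intro h0
        have hAy : A k *ᵥ y = 0 := (hAk.dotProduct_mulVec_zero_iff y).mp h0
        have hyr : y ∈ Set.range (P k).mulVec := by
          rw [hy, hv0, mulVec_zero, add_zero]; exact ⟨u, rfl⟩
        rw [← hPspan k] at hyr
        obtain ⟨z, hz⟩ := hyr
        have hyy : y ⬝ᵥ y = 0 := by
          nth_rewrite 1 [← hz]
          rw [dotProduct_comm, dotProduct_mulVec, ← mulVec_transpose, hAsym, hAy,
            zero_dotProduct]
        exact hy0 (by simpa [dotProduct_self_eq_zero] using hyy)
      have hpos : 0 < y ⬝ᵥ (A k *ᵥ y) := lt_of_le_of_ne hAq (Ne.symm hq)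
      rw [hv0]
      simpa using hpos
    · have h2 := hSpd.dotProduct_mulVec_pos hv0
      simp only [star_trivial] at h2
      linarith
end
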